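/- arXiv:2405.15648 — 7 statements merged into one kernel-verified Lean document; each statement's English description precedes it below -/
import Mathlib

section
/- Let p be an odd prime and let k, k' ∈ ZMod p with k ≠ k'. Then there exists an invertible map F on functions G × G → ℂ (with n = p) that is a finite composition of the operators S, T and T⁻¹, such that F (Z j) = Z (k + k' - j) for every j : ZMod p. In particular F (Z k) = Z k', F (Z k') = Z k, and F ∘ F fixes every Z j; i.e. any two ℤ_p×ℤ_p SPT phases of distinct levels are exchanged by a duality operation built from gauging and SPT stacking. (An explicit choice is F = T^{k+k'-1} ∘ S ∘ T ∘ S ∘ T⁻¹ ∘ S.) -/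
/-!
Torus partition functions of (1+1)d theories with ℤ_n×ℤ_n symmetry,
modeled as functions `GG n × GG n → ℂ` where `GG n := ZMod n × ZMod n`
records the holonomies of each ℤ_n background gauge field around the
two cycles of the torus.
-/

noncomputable section

/-- The holonomy group of one ℤ_n background gauge field on the torus. -/
abbrev GG (n : ℕ) := ZMod n × ZMod n

/-- The intersection pairing `ε a b = a₁ b₂ - a₂ b₁`. -/
def epsPair {n : ℕ} (a b : GG n) : ZMod n := a.1 * b.2 - a.2 * b.1

/-- The character `e x = exp(2πi x.val / n)`. -/
def eChar (n : ℕ) (x : ZMod n) : ℂ :=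
  Complex.exp (2 * Real.pi * Complex.I * (x.val : ℂ) / n)

/-- The gauging operation `S` on torus partition functions. -/
def gaugeS (n : ℕ) [NeZero n] (f : GG n × GG n → ℂ) : GG n × GG n → ℂ :=
  fun P => (n : ℂ)⁻¹ * (n : ℂ)⁻¹ *
    ∑ a : GG n, ∑ b : GG n, f (a, b) * eChar n (epsPair a P.2 + epsPair b P.1)

/-- The SPT-stacking operation `T` on torus partition functions. -/
def stackT (n : ℕ) (f : GG n × GG n → ℂ) : GG n × GG n → ℂ :=
  fun P => f P * eChar n (epsPair P.1 P.2)

/-- The inverse SPT-stacking operation `T⁻¹` on torus partition functions. -/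
def stackTinv (n : ℕ) (f : GG n × GG n → ℂ) : GG n × GG n → ℂ :=
  fun P => f P * eChar n (-(epsPair P.1 P.2))

/-- The torus partition function of the level-`k` ℤ_n×ℤ_n SPT phase. -/
def Zspt (n : ℕ) (k : ZMod n) : GG n × GG n → ℂ :=
  fun P => eChar n (k * epsPair P.1 P.2)

/-- `IsManip n F` holds when `F` is a finite composition of the gauging
operation `S`, the SPT-stacking operation `T`, and its inverse `T⁻¹`. -/
inductive IsManip (n : ℕ) [NeZero n] :
    ((GG n × GG n → ℂ) → (GG n × GG n → ℂ)) → Prop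
  | id : IsManip n id
  | comp_S {F} : IsManip n F → IsManip n (gaugeS n ∘ F)
  | comp_T {F} : IsManip n F → IsManip n (stackT n ∘ F)
  | comp_Tinv {F} : IsManip n F → IsManip n (stackTinv n ∘ F)


variable {n : ℕ} [NeZero n]

lemma eChar_eq (x : ZMod n) : eChar n x = ZMod.stdAddChar x := by
  rw [eChar, ZMod.stdAddChar_apply, ZMod.toCircle_apply]

lemma eChar_add (x y : ZMod n) : eChar n (x + y) = eChar n x * eChar n y := by
  simp [eChar_eq, AddChar.map_add_eq_mul]

lemma eChar_zero : eChar n (0 : ZMod n) = 1 := by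
  simp [eChar_eq]

lemma sum_eChar_mul (c : ZMod n) :
    ∑ x : ZMod n, eChar n (x * c) = if c = 0 then (n : ℂ) else 0 := by
  simp_rw [eChar_eq]
  rw [AddChar.sum_mulShift c (ZMod.isPrimitive_stdAddChar n)]
  simp [ZMod.card]

lemma sum_eChar_epsPair (v : GG n) :
    ∑ a : GG n, eChar n (epsPair a v) = if v = 0 then (n : ℂ) * n else 0 := by
  rw [Fintype.sum_prod_type]
  have h : ∀ x y : ZMod n, eChar n (epsPair (x, y) v)
      = eChar n (x * v.2) * eChar n (y * (-v.1)) := by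
    intro x y
    rw [← eChar_add]
    congr 1
    simp only [epsPair]
    ring
  simp_rw [h]
  rw [← Finset.sum_mul_sum]
  simp_rw [sum_eChar_mul, neg_eq_zero]
  by_cases h1 : v.1 = 0 <;> by_cases h2 : v.2 = 0 <;>
    simp [h1, h2, Prod.ext_iff]

lemma inv1 (h : GG n → ℂ) (v : GG n) :
    ∑ a : GG n, (∑ c : GG n, h c * eChar n (epsPair c a)) * eChar n (epsPair a v)
      = (n : ℂ) * n * h v := by
  simp_rw [Finset.sum_mul]
  rw [Finset.sum_comm]
  have key : ∀ c a : GG n, h c * eChar n (epsPair c a) * eChar n (epsPair a v)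
      = h c * eChar n (epsPair a (v - c)) := by
    intro c a
    rw [mul_assoc, ← eChar_add]
    congr 2
    simp only [epsPair, Prod.fst_sub, Prod.snd_sub]
    ring
  simp_rw [key, ← Finset.mul_sum, sum_eChar_epsPair, sub_eq_zero, mul_ite, mul_zero]
  rw [Finset.sum_ite_eq Finset.univ v (fun c => h c * ((n:ℂ)*n))]
  simp [mul_comm]

lemma n_ne_zero : (n : ℂ) ≠ 0 := Nat.cast_ne_zero.mpr (NeZero.ne n)

lemma gaugeS_eq (f : GG n × GG n → ℂ) (P : GG n × GG n) :
    gaugeS n f P = (n : ℂ)⁻¹ * (n : ℂ)⁻¹ *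
      ∑ a : GG n, (∑ b : GG n, f (a, b) * eChar n (epsPair b P.1)) * eChar n (epsPair a P.2) := by
  unfold gaugeS
  congr 1
  refine Finset.sum_congr rfl fun a _ => ?_
  rw [Finset.sum_mul]
  refine Finset.sum_congr rfl fun b _ => ?_
  rw [eChar_add]
  ring

lemma gaugeS_gaugeS (f : GG n × GG n → ℂ) : gaugeS n (gaugeS n f) = f := by
  funext P
  obtain ⟨A, B⟩ := P
  rw [gaugeS_eq]
  have inner : ∀ a : GG n,
      (∑ b : GG n, gaugeS n f (a, b) * eChar n (epsPair b A))
        = ∑ d : GG n, f (A, d) * eChar n (epsPair d a) := by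
    intro a
    have h1 : ∀ b : GG n, gaugeS n f (a, b) * eChar n (epsPair b A)
        = (n : ℂ)⁻¹ * (n : ℂ)⁻¹ *
          ((∑ c : GG n, (∑ d : GG n, f (c, d) * eChar n (epsPair d a)) * eChar n (epsPair c b))
            * eChar n (epsPair b A)) := by
      intro b
      rw [gaugeS_eq]
      ring
    simp_rw [h1, ← Finset.mul_sum]
    rw [inv1 (fun c => ∑ d : GG n, f (c, d) * eChar n (epsPair d a)) A]
    field_simp
    exact mul_div_cancel_left₀ _ (n_ne_zero (n := n))
  simp_rw [inner]
  rw [inv1 (fun d => f (A, d)) B]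
  field_simp
  exact mul_div_cancel_left₀ _ (n_ne_zero (n := n))

lemma stackTinv_stackT (f : GG n × GG n → ℂ) : stackTinv n (stackT n f) = f := by
  funext P
  show f P * eChar n (epsPair P.1 P.2) * eChar n (-(epsPair P.1 P.2)) = f P
  rw [mul_assoc, ← eChar_add, add_neg_cancel, eChar_zero, mul_one]

lemma stackT_stackTinv (f : GG n × GG n → ℂ) : stackT n (stackTinv n f) = f := by
  funext P
  show f P * eChar n (-(epsPair P.1 P.2)) * eChar n (epsPair P.1 P.2) = f P
  rw [mul_assoc, ← eChar_add, neg_add_cancel, eChar_zero, mul_one]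

lemma stackT_Zspt (j : ZMod n) : stackT n (Zspt n j) = Zspt n (j + 1) := by
  funext P
  show eChar n (j * epsPair P.1 P.2) * eChar n (epsPair P.1 P.2) = eChar n ((j + 1) * epsPair P.1 P.2)
  rw [← eChar_add]
  congr 1
  ring

lemma stackTinv_Zspt (j : ZMod n) : stackTinv n (Zspt n j) = Zspt n (j - 1) := by
  funext P
  show eChar n (j * epsPair P.1 P.2) * eChar n (-(epsPair P.1 P.2)) = eChar n ((j - 1) * epsPair P.1 P.2)
  rw [← eChar_add]
  congr 1
  ring

/-- The partition function obtained by gauging the trivial theory. -/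
def deltaFn (n : ℕ) : GG n × GG n → ℂ :=
  fun P => if P.1 = 0 ∧ P.2 = 0 then (n : ℂ) * n else 0

lemma stackT_delta : stackT n (deltaFn n) = deltaFn n := by
  funext P
  show deltaFn n P * eChar n (epsPair P.1 P.2) = deltaFn n P
  unfold deltaFn
  split_ifs with h
  · obtain ⟨h1, h2⟩ := h
    simp [h1, h2, epsPair, eChar_zero]
  · simp

lemma stackTinv_delta : stackTinv n (deltaFn n) = deltaFn n := by
  funext P
  show deltaFn n P * eChar n (-(epsPair P.1 P.2)) = deltaFn n P
  unfold deltaFn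
  split_ifs with h
  · obtain ⟨h1, h2⟩ := h
    simp [h1, h2, epsPair, eChar_zero]
  · simp

lemma gaugeS_Zspt_zero : gaugeS n (Zspt n 0) = deltaFn n := by
  funext P
  obtain ⟨A, B⟩ := P
  show (n : ℂ)⁻¹ * (n : ℂ)⁻¹ *
      ∑ a : GG n, ∑ b : GG n, Zspt n 0 (a, b) * eChar n (epsPair a B + epsPair b A) = _
  have h : ∀ a b : GG n, Zspt n 0 (a, b) * eChar n (epsPair a B + epsPair b A)
      = eChar n (epsPair a B) * eChar n (epsPair b A) := by
    intro a b
    rw [Zspt, zero_mul, eChar_zero, one_mul, eChar_add]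
  simp_rw [h]
  rw [← Finset.sum_mul_sum, sum_eChar_epsPair, sum_eChar_epsPair]
  unfold deltaFn
  by_cases hA : A = 0 <;> by_cases hB : B = 0 <;>
    simp [hA, hB] <;>
    field_simp

lemma gaugeS_delta : gaugeS n (deltaFn n) = Zspt n 0 := by
  funext P
  obtain ⟨A, B⟩ := P
  show (n : ℂ)⁻¹ * (n : ℂ)⁻¹ *
      ∑ a : GG n, ∑ b : GG n, deltaFn n (a, b) * eChar n (epsPair a B + epsPair b A)
      = Zspt n 0 (A, B)
  have h : ∀ a b : GG n, deltaFn n (a, b) * eChar n (epsPair a B + epsPair b A)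
      = if a = 0 then (if b = 0 then (n:ℂ) * n * eChar n (epsPair a B + epsPair b A) else 0) else 0 := by
    intro a b
    simp only [deltaFn]
    by_cases ha : a = 0 <;> by_cases hb : b = 0 <;> simp [ha, hb]
  simp_rw [h]
  have hpull : ∀ x : GG n, (∑ y : GG n, if x = 0 then
        (if y = 0 then (n:ℂ) * n * eChar n (epsPair x B + epsPair y A) else 0) else 0)
      = if x = 0 then (∑ y : GG n, if y = 0 then (n:ℂ) * n * eChar n (epsPair x B + epsPair y A) else 0)
        else 0 := by
    intro x
    split_ifs <;> simp
  simp_rw [hpull]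
  rw [Finset.sum_ite_eq' Finset.univ (0 : GG n)
    (fun a => ∑ b : GG n, if b = 0 then (n:ℂ) * n * eChar n (epsPair a B + epsPair b A) else 0)]
  simp only [Finset.mem_univ, if_true]
  rw [Finset.sum_ite_eq' Finset.univ (0 : GG n)
    (fun b => (n:ℂ) * n * eChar n (epsPair 0 B + epsPair b A))]
  have hz : epsPair (0 : GG n) B + epsPair (0 : GG n) A = 0 := by
    simp [epsPair]
  rw [if_pos (Finset.mem_univ _), hz, eChar_zero]
  show (n : ℂ)⁻¹ * (n : ℂ)⁻¹ * ((n:ℂ) * n * 1) = eChar n (0 * epsPair A B)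
  rw [zero_mul, eChar_zero]
  field_simp
  exact div_self (n_ne_zero (n := n))

section Prime

variable {p : ℕ} [Fact p.Prime]

lemma gaugeS_Zspt {j : ZMod p} (hj : j ≠ 0) : gaugeS p (Zspt p j) = Zspt p j⁻¹ := by
  funext P
  obtain ⟨A, B⟩ := P
  show (p : ℂ)⁻¹ * (p : ℂ)⁻¹ *
      ∑ a : GG p, ∑ b : GG p, Zspt p j (a, b) * eChar p (epsPair a B + epsPair b A)
      = Zspt p j⁻¹ (A, B)
  have h : ∀ a b : GG p, Zspt p j (a, b) * eChar p (epsPair a B + epsPair b A)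
      = eChar p (epsPair a B) * eChar p (epsPair b (A.1 - j * a.1, A.2 - j * a.2)) := by
    intro a b
    show eChar p (j * epsPair a b) * eChar p (epsPair a B + epsPair b A) = _
    rw [← eChar_add, ← eChar_add]
    congr 1
    simp only [epsPair]
    ring
  simp_rw [h, ← Finset.mul_sum, sum_eChar_epsPair]
  have hcond : ∀ a : GG p, (((A.1 - j * a.1, A.2 - j * a.2) : GG p) = 0)
      ↔ a = (j⁻¹ * A.1, j⁻¹ * A.2) := by
    intro a
    rw [Prod.ext_iff, Prod.ext_iff]
    simp only [Prod.fst_zero, Prod.snd_zero, sub_eq_zero]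
    constructor
    · rintro ⟨h1, h2⟩
      exact ⟨by rw [h1]; exact (inv_mul_cancel_left₀ hj _).symm,
             by rw [h2]; exact (inv_mul_cancel_left₀ hj _).symm⟩
    · rintro ⟨h1, h2⟩
      exact ⟨by rw [h1]; exact (mul_inv_cancel_left₀ hj _).symm,
             by rw [h2]; exact (mul_inv_cancel_left₀ hj _).symm⟩
  simp_rw [hcond, mul_ite, mul_zero]
  rw [Finset.sum_ite_eq' Finset.univ ((j⁻¹ * A.1, j⁻¹ * A.2) : GG p)
    (fun a => eChar p (epsPair a B) * ((p:ℂ) * p))]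
  rw [if_pos (Finset.mem_univ _)]
  have heps : epsPair ((j⁻¹ * A.1, j⁻¹ * A.2) : GG p) B = j⁻¹ * epsPair A B := by
    simp only [epsPair]
    ring
  rw [heps]
  show _ = eChar p (j⁻¹ * epsPair A B)
  have : (p : ℂ) ≠ 0 := n_ne_zero
  field_simp

end Prime

lemma isManip_iterT (m : ℕ) {F} (h : IsManip n F) : IsManip n ((stackT n)^[m] ∘ F) := by
  induction m with
  | zero => simpa using h
  | succ m ih =>
    rw [Function.iterate_succ']
    have h2 := ih.comp_T
    rwa [← Function.comp_assoc] at h2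

lemma bij_S : Function.Bijective (gaugeS n) := Function.Involutive.bijective gaugeS_gaugeS

lemma bij_T : Function.Bijective (stackT n) :=
  Function.bijective_iff_has_inverse.mpr ⟨stackTinv n, stackTinv_stackT, stackT_stackTinv⟩

lemma bij_Tinv : Function.Bijective (stackTinv n) :=
  Function.bijective_iff_has_inverse.mpr ⟨stackT n, stackT_stackTinv, stackTinv_stackT⟩

lemma isManip_bijective {F} (h : IsManip n F) : Function.Bijective F := by
  induction h with
  | id => exact Function.bijective_id
  | comp_S _ ih => exact bij_S.comp ih
  | comp_T _ ih => exact bij_T.comp ih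
  | comp_Tinv _ ih => exact bij_Tinv.comp ih

lemma iterT_Zspt (m : ℕ) (j : ZMod n) :
    (stackT n)^[m] (Zspt n j) = Zspt n (j + m) := by
  induction m with
  | zero => simp
  | succ m ih =>
    rw [Function.iterate_succ_apply', ih, stackT_Zspt]
    congr 1
    push_cast
    ring


/-- for an odd prime `p` and distinct levels `k ≠ k'` in `ZMod p`,
there is an invertible topological manipulation `F`, a finite composition of
`S`, `T` and `T⁻¹`, with `F (Z j) = Z (k + k' - j)` for every level `j`; in
particular `F` exchanges `Z k` and `Z k'`, and `F ∘ F` fixes every `Z j`.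
Thus any two ℤ_p×ℤ_p SPT phases of distinct levels are exchanged by a duality
operation built from gauging and SPT stacking. -/
theorem duality_between_distinct_SPTs_odd_prime (p : ℕ) [Fact p.Prime]
    (hodd : Odd p) (k k' : ZMod p) (hkk' : k ≠ k') :
    ∃ F : (GG p × GG p → ℂ) → (GG p × GG p → ℂ),
      IsManip p F ∧ Function.Bijective F ∧
      (∀ j : ZMod p, F (Zspt p j) = Zspt p (k + k' - j)) ∧
      F (Zspt p k) = Zspt p k' ∧ F (Zspt p k') = Zspt p k ∧
      (∀ j : ZMod p, F (F (Zspt p j)) = Zspt p j) := by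
  set m : ℕ := (k + k' - 1).val with hm
  have hmcast : ((m : ℕ) : ZMod p) = k + k' - 1 := by
    simp [hm, ZMod.natCast_val, ZMod.cast_id]
  set F : (GG p × GG p → ℂ) → (GG p × GG p → ℂ) :=
    (stackT p)^[m] ∘ gaugeS p ∘ stackT p ∘ gaugeS p ∘ stackTinv p ∘ gaugeS p with hF
  have hmanip : IsManip p F := by
    have h := isManip_iterT m
      ((((IsManip.id (n := p)).comp_S).comp_Tinv).comp_S).comp_T.comp_S
    simpa [Function.comp_id, hF] using h
  have hbij : Function.Bijective F := isManip_bijective hmanip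
  have hkey : ∀ j : ZMod p, F (Zspt p j) = Zspt p (k + k' - j) := by
    intro j
    show (stackT p)^[m] (gaugeS p (stackT p (gaugeS p (stackTinv p (gaugeS p (Zspt p j))))))
      = Zspt p (k + k' - j)
    by_cases hj0 : j = 0
    · subst hj0
      rw [gaugeS_Zspt_zero, stackTinv_delta, gaugeS_delta, stackT_Zspt,
        gaugeS_Zspt (by norm_num : ((0 : ZMod p) + 1) ≠ 0), iterT_Zspt, hmcast]
      congr 1
      norm_num
    · by_cases hj1 : j = 1
      · subst hj1
        rw [gaugeS_Zspt hj0, inv_one, stackTinv_Zspt, sub_self, gaugeS_Zspt_zero,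
          stackT_delta, gaugeS_delta, iterT_Zspt, hmcast]
        congr 1
        ring
      · have h2 : j⁻¹ - 1 ≠ 0 := by
          rw [sub_ne_zero]
          intro h
          exact hj1 (inv_eq_one.mp h)
        have h1j : (1 : ZMod p) - j ≠ 0 := sub_ne_zero.mpr (Ne.symm hj1)
        have h3 : (j⁻¹ - 1)⁻¹ + 1 = ((1 : ZMod p) - j)⁻¹ := by
          field_simp
          ring
        rw [gaugeS_Zspt hj0, stackTinv_Zspt, gaugeS_Zspt h2, stackT_Zspt, h3,
          gaugeS_Zspt (inv_ne_zero h1j), inv_inv, iterT_Zspt, hmcast]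
        congr 1
        ring
  refine ⟨F, hmanip, hbij, hkey, ?_, ?_, ?_⟩
  · rw [hkey k]; congr 1; ring
  · rw [hkey k']; congr 1; ring
  · intro j
    rw [hkey j, hkey (k + k' - j)]
    congr 1
    ring

end
end

section
/- For every integer n ≥ 1 and every unit k of ZMod n, gauging the ℤ_n×ℤ_n symmetry sends the level-k SPT to the level-k⁻¹ SPT on the torus: S (Z k) = Z (k⁻¹). -/
/-!
Torus partition functions of (1+1)d theories with ℤ_n×ℤ_n symmetry,
modeled as functions `GG n × GG n → ℂ` where `GG n := ZMod n × ZMod n`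
records the holonomies of each ℤ_n background gauge field around the
two cycles of the torus.
-/

noncomputable section

lemma echar_eq (n : ℕ) [NeZero n] (x : ZMod n) :
    eChar n x = ZMod.stdAddChar x := by
  rw [eChar, ZMod.stdAddChar_apply, ZMod.toCircle_apply]

lemma sum1 (n : ℕ) [NeZero n] (c : ZMod n) :
    ∑ x : ZMod n, ZMod.stdAddChar (x * c) = if c = 0 then (n : ℂ) else 0 := by
  rw [AddChar.sum_mulShift c (ZMod.isPrimitive_stdAddChar n), ZMod.card]
  split_ifs <;> simp

lemma key (n : ℕ) [NeZero n] (c1 c2 d : ZMod n) :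
    ∑ a : GG n, ZMod.stdAddChar (a.1 * c1 + a.2 * c2 + d) =
      (if c1 = 0 then (n : ℂ) else 0) * (if c2 = 0 then (n : ℂ) else 0) *
        ZMod.stdAddChar d := by
  rw [Fintype.sum_prod_type, ← sum1 n c1, ← sum1 n c2]
  simp only [Finset.sum_mul, Finset.mul_sum]
  rw [Finset.sum_comm]
  apply Finset.sum_congr rfl; intro x _
  apply Finset.sum_congr rfl; intro y _
  rw [AddChar.map_add_eq_mul, AddChar.map_add_eq_mul, mul_comm y c1]

/-- for every unit `k` of `ZMod n`, gauging the ℤ_n×ℤ_n symmetry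
sends the level-`k` SPT to the level-`k⁻¹` SPT on the torus. -/
theorem gaugeS_Zspt_unit (n : ℕ) [NeZero n] (k : ZMod n) (hk : IsUnit k) :
    gaugeS n (Zspt n k) = Zspt n k⁻¹ := by
  have hinv : k⁻¹ * k = 1 := ZMod.inv_mul_of_unit k hk
  have hcond : ∀ c d : ZMod n, (k * c + d = 0) ↔ (c = -(k⁻¹ * d)) := by
    intro c d
    constructor
    · intro h
      have h1 : k * c = -d := by linear_combination h
      calc c = k⁻¹ * (k * c) := by rw [← mul_assoc, hinv, one_mul]
        _ = -(k⁻¹ * d) := by rw [h1]; ring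
    · intro h; rw [h]; rw [mul_neg]; rw [← mul_assoc, ZMod.mul_inv_of_unit k hk]; ring
  have hn : (n : ℂ) ≠ 0 := Nat.cast_ne_zero.mpr (NeZero.ne n)
  funext P
  obtain ⟨A, B⟩ := P
  show (n : ℂ)⁻¹ * (n : ℂ)⁻¹ *
      ∑ a : GG n, ∑ b : GG n, Zspt n k (a, b) * eChar n (epsPair a B + epsPair b A)
    = Zspt n k⁻¹ (A, B)
  have step1 : ∀ a b : GG n,
      Zspt n k (a, b) * eChar n (epsPair a B + epsPair b A) =
      ZMod.stdAddChar (a.1 * (k * b.2 + B.2) + a.2 * (-(k * b.1) - B.1)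
        + (b.1 * A.2 - b.2 * A.1)) := by
    intro a b
    rw [Zspt, echar_eq, echar_eq, ← AddChar.map_add_eq_mul]
    congr 1
    simp only [epsPair]
    ring
  simp only [step1]
  rw [Finset.sum_comm]
  have step2 : ∀ b : GG n,
      ∑ a : GG n, ZMod.stdAddChar (a.1 * (k * b.2 + B.2) + a.2 * (-(k * b.1) - B.1)
        + (b.1 * A.2 - b.2 * A.1)) =
      (if b.2 = -(k⁻¹ * B.2) then (n : ℂ) else 0) *
      (if b.1 = -(k⁻¹ * B.1) then (n : ℂ) else 0) *
        ZMod.stdAddChar (b.1 * A.2 - b.2 * A.1) := by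
    intro b
    rw [key]
    have h2 : (-(k * b.1) - B.1 = 0) ↔ (b.1 = -(k⁻¹ * B.1)) := by
      rw [← hcond]
      constructor <;> intro h <;> linear_combination -h
    rw [if_congr (hcond b.2 B.2) rfl rfl, if_congr h2 rfl rfl]
  simp only [step2]
  rw [Fintype.sum_prod_type]
  simp only [ite_mul, mul_ite, zero_mul, mul_zero, Finset.sum_ite_eq', Finset.mem_univ,
    if_true, Finset.sum_ite_irrel, Finset.sum_const_zero]
  rw [Zspt, echar_eq]
  have harg : (-(k⁻¹ * B.1)) * A.2 - (-(k⁻¹ * B.2)) * A.1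
      = k⁻¹ * epsPair A B := by
    simp only [epsPair]; ring
  rw [harg]
  field_simp


end
end

section
/- Take n = 2. If f : G × G → ℂ satisfies S f = f (the theory is self-dual under gauging), then T (S (T f)) = S (T f); i.e. the manipulation ST maps any theory that is self-dual under S to a theory that is invariant under the SPT-stacking operation T. (This is the mechanism behind the duality between the enhanced symmetry categories C_S and C_T.) -/
/-!
Torus partition functions of (1+1)d theories with ℤ_n×ℤ_n symmetry,
modeled as functions `GG n × GG n → ℂ` where `GG n := ZMod n × ZMod n`
records the holonomies of each ℤ_n background gauge field around the
two cycles of the torus.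
-/

noncomputable section

lemma eChar2_zero : eChar 2 0 = 1 := by
  have : ((0 : ZMod 2)).val = 0 := rfl
  simp [eChar, this]

lemma eChar2_one : eChar 2 1 = -1 := by
  have : ((1 : ZMod 2)).val = 1 := rfl
  rw [eChar, this]
  push_cast
  rw [show (2:ℂ) * Real.pi * Complex.I * 1 / 2 = Real.pi * Complex.I by ring,
    Complex.exp_pi_mul_I]

lemma sumZMod2 (g : ZMod 2 → ℂ) : ∑ x : ZMod 2, g x = g 0 + g 1 := by
  rw [show (Finset.univ : Finset (ZMod 2)) = {0, 1} by decide]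
  rw [Finset.sum_pair (by decide)]

lemma sumGG2 (g : GG 2 → ℂ) :
    ∑ x : GG 2, g x = g (0,0) + g (0,1) + g (1,0) + g (1,1) := by
  rw [Fintype.sum_prod_type, sumZMod2 (fun a => ∑ b : ZMod 2, g (a, b)),
    sumZMod2, sumZMod2]
  ring

lemma eChar2_ite (x : ZMod 2) : eChar 2 x = if x = 0 then 1 else -1 := by
  fin_cases x
  · exact eChar2_zero.trans (if_pos rfl).symm
  · exact eChar2_one.trans (if_neg (show (1 : ZMod 2) ≠ 0 by decide)).symm

set_option maxHeartbeats 4000000 in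
lemma STS_eq_TST (f : GG 2 × GG 2 → ℂ) :
    gaugeS 2 (stackT 2 (gaugeS 2 f)) = stackT 2 (gaugeS 2 (stackT 2 f)) := by
  funext P
  obtain ⟨⟨A1, A2⟩, ⟨B1, B2⟩⟩ := P
  fin_cases A1 <;> fin_cases A2 <;> fin_cases B1 <;> fin_cases B2 <;>
    · simp only [stackT, gaugeS]
      simp only [sumGG2]
      simp only [epsPair]
      simp (config := { decide := true }) only [eChar2_ite]
      norm_num
      try ring

/-- for n = 2, the manipulation `ST` maps any theory that is
self-dual under gauging `S` to a theory that is invariant under the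
SPT-stacking operation `T`. -/
theorem ST_maps_S_selfdual_to_T_selfdual (f : GG 2 × GG 2 → ℂ)
    (hf : gaugeS 2 f = f) :
    stackT 2 (gaugeS 2 (stackT 2 f)) = gaugeS 2 (stackT 2 f) := by
  rw [← STS_eq_TST, hf]

end
end

section
/- Let G := ZMod 2 × ZMod 2 × ZMod 2 (an additive group) and define ω : G → G → G → ℂ by ω a b c := (-1 : ℂ)^((a.1 * b.2.1 * c.2.2).val). Then (i) ω satisfies the multiplicative 3-cocycle identity ω b c d * ω a (b + c) d * ω a b c = ω (a + b) c d * ω a b (c + d) for all a b c d : G, and (ii) ω is not a coboundary: there is no function β : G → G → ℂˣ such that ω a b c = (β b c : ℂ) * (β (a + b) c : ℂ)⁻¹ * (β a (b + c) : ℂ) * (β a b : ℂ)⁻¹ for all a b c : G. Hence the ℤ₂^A×ℤ₂^B×ℤ₂^C symmetry with this cocycle carries a nontrivial ('t Hooft) mixed anomaly. -/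
/-- The type-III anomaly 3-cocycle `ω = (-1)^{∫ A B C}` of the
ℤ₂^A×ℤ₂^B×ℤ₂^C symmetry, on `G = ZMod 2 × ZMod 2 × ZMod 2`. -/
def typeIIICocycle (a b c : ZMod 2 × ZMod 2 × ZMod 2) : ℂ :=
  (-1 : ℂ) ^ ((a.1 * b.2.1 * c.2.2).val)

lemma chi_add (x y : ZMod 2) :
    (-1 : ℂ) ^ x.val * (-1 : ℂ) ^ y.val = (-1 : ℂ) ^ ((x + y).val) := by
  rcases (by decide : ∀ z : ZMod 2, z = 0 ∨ z = 1) x with rfl | rfl <;>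
    rcases (by decide : ∀ z : ZMod 2, z = 0 ∨ z = 1) y with rfl | rfl <;>
    norm_num [show ZMod.val (2 : ZMod 2) = 0 from rfl,
      show ZMod.val (1 : ZMod 2) = 1 from rfl, show ZMod.val (0 : ZMod 2) = 0 from rfl]

lemma typeIII_cocycle_id (a b c d : ZMod 2 × ZMod 2 × ZMod 2) :
    typeIIICocycle b c d * typeIIICocycle a (b + c) d * typeIIICocycle a b c =
      typeIIICocycle (a + b) c d * typeIIICocycle a b (c + d) := by
  simp only [typeIIICocycle, Prod.fst_add, Prod.snd_add]
  rw [chi_add, chi_add, chi_add]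
  congr 1
  exact congrArg ZMod.val (by ring)

/-- the type-III cocycle `ω a b c = (-1)^{a₁ b₂ c₃}` on
`G = ZMod 2 × ZMod 2 × ZMod 2` satisfies the multiplicative 3-cocycle identity
but is not the coboundary of any 2-cochain `β : G → G → ℂˣ`; hence the
ℤ₂^A×ℤ₂^B×ℤ₂^C symmetry carries a nontrivial ('t Hooft) mixed anomaly. -/
theorem typeIII_anomaly_nontrivial :
    (∀ a b c d : ZMod 2 × ZMod 2 × ZMod 2,
      typeIIICocycle b c d * typeIIICocycle a (b + c) d * typeIIICocycle a b c =
        typeIIICocycle (a + b) c d * typeIIICocycle a b (c + d)) ∧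
    ¬ ∃ β : (ZMod 2 × ZMod 2 × ZMod 2) → (ZMod 2 × ZMod 2 × ZMod 2) → ℂˣ,
      ∀ a b c : ZMod 2 × ZMod 2 × ZMod 2,
        typeIIICocycle a b c =
          (β b c : ℂ) * ((β (a + b) c : ℂ))⁻¹ * (β a (b + c) : ℂ) *
            ((β a b : ℂ))⁻¹ := by
  refine ⟨typeIII_cocycle_id, ?_⟩
  rintro ⟨β, h⟩
  set x : ZMod 2 × ZMod 2 × ZMod 2 := (1, 0, 0) with hx
  set y : ZMod 2 × ZMod 2 × ZMod 2 := (0, 1, 0) with hy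
  set z : ZMod 2 × ZMod 2 × ZMod 2 := (0, 0, 1) with hz
  have hβ : ∀ u v, (β u v : ℂ) ≠ 0 := fun u v => Units.ne_zero _
  have sxy : x + y = (1, 1, 0) := by decide
  have syx : y + x = (1, 1, 0) := by decide
  have sxz : x + z = (1, 0, 1) := by decide
  have szx : z + x = (1, 0, 1) := by decide
  have syz : y + z = (0, 1, 1) := by decide
  have szy : z + y = (0, 1, 1) := by decide
  have h1 := h x y z
  have h2 := h x z y
  have h3 := h y x z
  have h4 := h y z x
  have h5 := h z x y
  have h6 := h z y x
  rw [sxy, syz] at h1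
  rw [sxz, szy] at h2
  rw [syx, sxz] at h3
  rw [syz, szx] at h4
  rw [szx, sxy] at h5
  rw [szy, syx] at h6
  have v1 : typeIIICocycle x y z = -1 := by norm_num [typeIIICocycle, hx, hy, hz, show ZMod.val (1 : ZMod 2) = 1 from rfl, show ZMod.val (0 : ZMod 2) = 0 from rfl]
  have v2 : typeIIICocycle x z y = 1 := by norm_num [typeIIICocycle, hx, hy, hz, show ZMod.val (1 : ZMod 2) = 1 from rfl, show ZMod.val (0 : ZMod 2) = 0 from rfl]
  have v3 : typeIIICocycle y x z = 1 := by norm_num [typeIIICocycle, hx, hy, hz, show ZMod.val (1 : ZMod 2) = 1 from rfl, show ZMod.val (0 : ZMod 2) = 0 from rfl]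
  have v4 : typeIIICocycle y z x = 1 := by norm_num [typeIIICocycle, hx, hy, hz, show ZMod.val (1 : ZMod 2) = 1 from rfl, show ZMod.val (0 : ZMod 2) = 0 from rfl]
  have v5 : typeIIICocycle z x y = 1 := by norm_num [typeIIICocycle, hx, hy, hz, show ZMod.val (1 : ZMod 2) = 1 from rfl, show ZMod.val (0 : ZMod 2) = 0 from rfl]
  have v6 : typeIIICocycle z y x = 1 := by norm_num [typeIIICocycle, hx, hy, hz, show ZMod.val (1 : ZMod 2) = 1 from rfl, show ZMod.val (0 : ZMod 2) = 0 from rfl]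
  rw [v1] at h1; rw [v2] at h2; rw [v3] at h3; rw [v4] at h4; rw [v5] at h5; rw [v6] at h6
  have key : (-1 : ℂ) * 1 * 1 = 1 * 1 * 1 := by
    rw [h1]
    nth_rewrite 1 [h4]
    nth_rewrite 1 [h5]
    nth_rewrite 1 [h2]
    nth_rewrite 1 [h3]
    nth_rewrite 1 [h6]
    field_simp
  norm_num at key
end

section
/- Fix an even integer N ≥ 4 and let V := ∏_{j : Fin N} Matrix.exp ((π * Complex.I / 4) • (1 + (ε j : ℂ) • (Z j * Z (j + 1)))) (the factors pairwise commute, so the product over Fin N is unambiguous, e.g. as Finset.noncommProd). Then V is invertible, V commutes with every Z j, and for every j : Fin N one has V * X j * V⁻¹ = Z (j - 1) * X j * Z (j + 1). Hence V is a finite-depth local unitary realizing the SPT-stacking operation T: σ_j^x ↦ σ_{j-1}^z σ_j^x σ_{j+1}^z. -/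
noncomputable section

open NormedSpace  -- for the exponential `exp 𝕂`

/-- Spin configurations of a periodic chain of `N` qubits. -/
abbrev Conf (N : ℕ) := Fin N → Fin 2

/-- The Pauli-z operator at site `j`: the diagonal matrix with
`(Z j) s s = (-1)^(s j)`. -/
def PZ (N : ℕ) (j : Fin N) : Matrix (Conf N) (Conf N) ℂ :=
  Matrix.diagonal (fun s => (-1 : ℂ) ^ ((s j : ℕ)))

/-- The Pauli-x operator at site `j`: `(X j) s t = 1` if `t` agrees with `s`
at every site other than `j` and `t j ≠ s j`, and `0` otherwise. -/
def PX (N : ℕ) (j : Fin N) : Matrix (Conf N) (Conf N) ℂ :=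
  fun s t => if (∀ i, i ≠ j → t i = s i) ∧ t j ≠ s j then 1 else 0

/-- The sign `ε j = (-1)^j`, well defined on `Fin N` for even `N`. -/
def epsSign (N : ℕ) (j : Fin N) : ℂ := (-1 : ℂ) ^ ((j : ℕ))

/-- The SPT entangler
`V = ∏_{j : Fin N} exp((πi/4) • (1 + ε j • (Z j * Z (j+1))))`.
All factors are pairwise commuting, so the product over `Fin N` is
unambiguous; we realize it as the ordered product of the list of factors. -/
def entangler (N : ℕ) [NeZero N] : Matrix (Conf N) (Conf N) ℂ :=
  (List.ofFn (fun j : Fin N =>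
    exp (((Real.pi : ℂ) * Complex.I / 4) •
      ((1 : Matrix (Conf N) (Conf N) ℂ) +
        epsSign N j • (PZ N j * PZ N (j + 1)))))).prod

/-- The diagonal entry function of the entangler. -/
def entDiag (N : ℕ) [NeZero N] (s : Conf N) : ℂ :=
  ∏ j : Fin N, Complex.exp (((Real.pi : ℂ) * Complex.I / 4) *
    (1 + epsSign N j * ((-1 : ℂ) ^ ((s j : ℕ)) * (-1 : ℂ) ^ ((s (j + 1) : ℕ)))))

lemma list_prod_diagonal {ι : Type*} [Fintype ι] [DecidableEq ι]
    (l : List (ι → ℂ)) :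
    (l.map Matrix.diagonal).prod = Matrix.diagonal (fun s => (l.map (fun f => f s)).prod) := by
  induction l with
  | nil => simp
  | cons a l ih => simp [ih, Matrix.diagonal_mul_diagonal]

lemma entangler_eq_diagonal (N : ℕ) [NeZero N] :
    entangler N = Matrix.diagonal (entDiag N) := by
  have hfac : ∀ j : Fin N,
      exp (((Real.pi : ℂ) * Complex.I / 4) •
        ((1 : Matrix (Conf N) (Conf N) ℂ) + epsSign N j • (PZ N j * PZ N (j + 1)))) =
      Matrix.diagonal (fun s => Complex.exp (((Real.pi : ℂ) * Complex.I / 4) *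
        (1 + epsSign N j * ((-1 : ℂ) ^ ((s j : ℕ)) * (-1 : ℂ) ^ ((s (j + 1) : ℕ)))))) := by
    intro j
    rw [PZ, PZ,
      show ((1 : Matrix (Conf N) (Conf N) ℂ)) = Matrix.diagonal 1 from (Matrix.diagonal_one).symm,
      Matrix.diagonal_mul_diagonal, ← Matrix.diagonal_smul, Matrix.diagonal_add,
      ← Matrix.diagonal_smul, Matrix.exp_diagonal, Pi.exp_def]
    congr 1
    funext s
    rw [Complex.exp_eq_exp_ℂ]
    congr 1
  unfold entangler
  simp_rw [hfac]
  rw [show (List.ofFn fun j : Fin N => Matrix.diagonal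
      (fun s : Conf N => Complex.exp (((Real.pi : ℂ) * Complex.I / 4) *
        (1 + epsSign N j * ((-1 : ℂ) ^ ((s j : ℕ)) * (-1 : ℂ) ^ ((s (j + 1) : ℕ))))))) =
      (List.ofFn fun j : Fin N => (fun s : Conf N => Complex.exp (((Real.pi : ℂ) * Complex.I / 4) *
        (1 + epsSign N j * ((-1 : ℂ) ^ ((s j : ℕ)) * (-1 : ℂ) ^ ((s (j + 1) : ℕ))))))).map
        Matrix.diagonal from by rw [List.map_ofFn]; rfl,
    list_prod_diagonal]
  exact congrArg Matrix.diagonal (funext fun s => by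
    rw [List.map_ofFn, List.prod_ofFn]; rfl)

lemma entDiag_ne_zero (N : ℕ) [NeZero N] (s : Conf N) : entDiag N s ≠ 0 :=
  Finset.prod_ne_zero_iff.mpr fun j _ => Complex.exp_ne_zero _

lemma epsSign_cases (N : ℕ) (j : Fin N) : epsSign N j = 1 ∨ epsSign N j = -1 :=
  (Nat.even_or_odd (j : ℕ)).imp Even.neg_one_pow Odd.neg_one_pow

lemma epsSign_sub_one (N : ℕ) [NeZero N] (hN : 4 ≤ N) (hNeven : Even N) (j : Fin N) :
    epsSign N (j - 1) = -epsSign N j := by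
  obtain ⟨m, hm⟩ := hNeven
  have h1 : ((1 : Fin N) : ℕ) = 1 := by
    rw [Fin.val_one', Nat.mod_eq_of_lt (by omega)]
  have hval : ((j - 1 : Fin N) : ℕ) = ((j : ℕ) + (N - 1)) % N := by
    rw [Fin.sub_def]; simp [h1]
    rw [Nat.mod_eq_of_lt (show 1 < N by omega), add_comm]
  have hdvd : (2 : ℕ) ∣ N := ⟨m, by omega⟩
  have hpar : ((j - 1 : Fin N) : ℕ) % 2 = ((j : ℕ) + (N - 1)) % 2 := by
    rw [hval, Nat.mod_mod_of_dvd _ hdvd]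
  have hj := j.isLt
  rcases Nat.even_or_odd (j : ℕ) with h | h
  · have h2 : Odd ((j - 1 : Fin N) : ℕ) := by
      rw [Nat.odd_iff, hpar]; rw [Nat.even_iff] at h; omega
    simp [epsSign, h2.neg_one_pow, h.neg_one_pow]
  · have h2 : Even ((j - 1 : Fin N) : ℕ) := by
      rw [Nat.even_iff, hpar]; rw [Nat.odd_iff] at h; omega
    simp [epsSign, h2.neg_one_pow, h.neg_one_pow]

lemma exp_quarter_key (a b e ε : ℂ) (ha : a = 1 ∨ a = -1) (hb : b = 1 ∨ b = -1)
    (he : e = 1 ∨ e = -1) (hε : ε = 1 ∨ ε = -1) :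
    Complex.exp ((Real.pi : ℂ) * Complex.I / 4 * (1 + (-ε) * (a * b))) *
      (Complex.exp ((Real.pi : ℂ) * Complex.I / 4 * (1 + (-ε) * (a * (-b)))))⁻¹ *
    (Complex.exp ((Real.pi : ℂ) * Complex.I / 4 * (1 + ε * (b * e))) *
      (Complex.exp ((Real.pi : ℂ) * Complex.I / 4 * (1 + ε * ((-b) * e))))⁻¹) = a * e := by
  have h1 : Complex.exp ((Real.pi : ℂ) * Complex.I) = -1 := Complex.exp_pi_mul_I
  have h2 : Complex.exp (-((Real.pi : ℂ) * Complex.I)) = -1 := by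
    rw [Complex.exp_neg, h1]; norm_num
  rw [← div_eq_mul_inv, ← div_eq_mul_inv, ← Complex.exp_sub, ← Complex.exp_sub, ← Complex.exp_add]
  rcases ha with rfl | rfl <;> rcases hb with rfl | rfl <;> rcases he with rfl | rfl <;>
    rcases hε with rfl | rfl <;> ring_nf <;>
    simp_all [Complex.exp_zero, mul_comm]

lemma neg_one_pow_cases (n : ℕ) : (-1 : ℂ) ^ n = 1 ∨ (-1 : ℂ) ^ n = -1 :=
  (Nat.even_or_odd n).imp Even.neg_one_pow Odd.neg_one_pow

/-- for even `N ≥ 4`, the SPT entangler `V` is invertible,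
commutes with every `Z j`, and conjugates each `X j` to
`Z (j-1) * X j * Z (j+1)`; hence `V` is a finite-depth local unitary realizing
the SPT-stacking operation `T : σ_j^x ↦ σ_{j-1}^z σ_j^x σ_{j+1}^z`. -/
theorem entangler_conjugation (N : ℕ) [NeZero N] (hN : 4 ≤ N) (hNeven : Even N) :
    IsUnit (entangler N) ∧
    (∀ j : Fin N, entangler N * PZ N j = PZ N j * entangler N) ∧
    (∀ j : Fin N,
      entangler N * PX N j * (entangler N)⁻¹ = PZ N (j - 1) * PX N j * PZ N (j + 1)) := by
  have hone : (1 : Fin N) ≠ 0 := by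
    intro h
    have := congrArg Fin.val h
    rw [Fin.val_one', Nat.mod_eq_of_lt (by omega)] at this
    simp at this
  refine ⟨?_, ?_, ?_⟩
  · rw [entangler_eq_diagonal]
    rw [Matrix.isUnit_iff_isUnit_det, Matrix.det_diagonal]
    exact isUnit_iff_ne_zero.mpr
      (Finset.prod_ne_zero_iff.mpr fun s _ => entDiag_ne_zero N s)
  · intro j
    rw [entangler_eq_diagonal, PZ, Matrix.diagonal_mul_diagonal, Matrix.diagonal_mul_diagonal]
    exact congrArg Matrix.diagonal (funext fun i => mul_comm _ _)
  · intro j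
    have hinv : (entangler N)⁻¹ = Matrix.diagonal (fun s => (entDiag N s)⁻¹) := by
      rw [entangler_eq_diagonal]
      apply Matrix.inv_eq_right_inv
      rw [Matrix.diagonal_mul_diagonal, ← Matrix.diagonal_one]
      exact congrArg Matrix.diagonal
        (funext fun i => mul_inv_cancel₀ (entDiag_ne_zero N i))
    rw [hinv, entangler_eq_diagonal, PZ, PZ]
    ext s t
    simp only [Matrix.diagonal_mul, Matrix.mul_diagonal]
    rw [PX]
    by_cases h : (∀ i, i ≠ j → t i = s i) ∧ t j ≠ s j
    · simp only [if_pos h]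
      obtain ⟨h1, h2⟩ := h
      have hj1 : j + 1 ≠ j := fun he => hone (by simpa using add_eq_left.mp he)
      have hjm : j - 1 ≠ j := fun he => hone (sub_eq_self.mp he)
      have ht1 : t (j + 1) = s (j + 1) := h1 _ hj1
      have htm : t (j - 1) = s (j - 1) := h1 _ hjm
      rw [ht1, mul_one, mul_one]
      -- reduce to the ratio of diagonal entries
      rw [entDiag, entDiag, ← Finset.prod_inv_distrib, ← Finset.prod_mul_distrib]
      have hout : ∀ k ∈ (Finset.univ : Finset (Fin N)), k ∉ ({j - 1, j} : Finset (Fin N)) →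
          Complex.exp ((Real.pi : ℂ) * Complex.I / 4 *
              (1 + epsSign N k * ((-1 : ℂ) ^ ((s k : ℕ)) * (-1 : ℂ) ^ ((s (k + 1) : ℕ))))) *
            (Complex.exp ((Real.pi : ℂ) * Complex.I / 4 *
              (1 + epsSign N k * ((-1 : ℂ) ^ ((t k : ℕ)) * (-1 : ℂ) ^ ((t (k + 1) : ℕ))))))⁻¹ = 1 := by
        intro k _ hk
        simp only [Finset.mem_insert, Finset.mem_singleton, not_or] at hk
        obtain ⟨hk1, hk2⟩ := hk
        have e1 : t k = s k := h1 k hk2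
        have e2 : t (k + 1) = s (k + 1) := by
          refine h1 _ fun he => hk1 ?_
          rw [← he, add_sub_cancel_right]
        rw [e1, e2]
        exact mul_inv_cancel₀ (Complex.exp_ne_zero _)
      rw [← Finset.prod_subset (Finset.subset_univ ({j - 1, j} : Finset (Fin N))) hout]
      rw [Finset.prod_pair hjm]
      rw [htm, sub_add_cancel, ht1]
      -- flip relation at site j
      have hb' : ((-1 : ℂ)) ^ ((t j : ℕ)) = -((-1 : ℂ)) ^ ((s j : ℕ)) := by
        have hs2 := (s j).isLt
        have ht2 := (t j).isLt
        have hne : (t j : ℕ) ≠ (s j : ℕ) := fun hh => h2 (Fin.ext hh)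
        have : ((t j : ℕ) = 0 ∧ (s j : ℕ) = 1) ∨ ((t j : ℕ) = 1 ∧ (s j : ℕ) = 0) := by omega
        rcases this with ⟨ha, hb⟩ | ⟨ha, hb⟩ <;> rw [ha, hb] <;> norm_num
      rw [hb', epsSign_sub_one N hN hNeven j]
      have := exp_quarter_key ((-1 : ℂ) ^ ((s (j - 1) : ℕ))) ((-1 : ℂ) ^ ((s j : ℕ)))
        ((-1 : ℂ) ^ ((s (j + 1) : ℕ))) (epsSign N j)
        (neg_one_pow_cases _) (neg_one_pow_cases _) (neg_one_pow_cases _) (epsSign_cases N j)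
      calc _ = Complex.exp ((Real.pi : ℂ) * Complex.I / 4 *
              (1 + (-epsSign N j) * ((-1 : ℂ) ^ ((s (j - 1) : ℕ)) * (-1 : ℂ) ^ ((s j : ℕ))))) *
            (Complex.exp ((Real.pi : ℂ) * Complex.I / 4 *
              (1 + (-epsSign N j) * ((-1 : ℂ) ^ ((s (j - 1) : ℕ)) * (-((-1 : ℂ) ^ ((s j : ℕ))))))))⁻¹ *
            (Complex.exp ((Real.pi : ℂ) * Complex.I / 4 *
              (1 + epsSign N j * ((-1 : ℂ) ^ ((s j : ℕ)) * (-1 : ℂ) ^ ((s (j + 1) : ℕ))))) *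
            (Complex.exp ((Real.pi : ℂ) * Complex.I / 4 *
              (1 + epsSign N j * ((-((-1 : ℂ) ^ ((s j : ℕ)))) * (-1 : ℂ) ^ ((s (j + 1) : ℕ))))))⁻¹) := by
            ring
        _ = (-1 : ℂ) ^ ((s (j - 1) : ℕ)) * (-1 : ℂ) ^ ((s (j + 1) : ℕ)) := this
    · simp only [if_neg h]
      ring
end
end

section
/- Fix an even integer N ≥ 4 and let V := ∏_{j : Fin N} Matrix.exp ((π * Complex.I / 4) • (1 + (ε j : ℂ) • (Z j * Z (j + 1)))). Then V commutes with both generators of the ℤ₂×ℤ₂ symmetry: V * U_A = U_A * V and V * U_B = U_B * V, where U_A := ∏_{j : Fin N, (j : ℕ) odd} X j and U_B := ∏_{j : Fin N, (j : ℕ) even} X j. Hence V is a ℤ₂×ℤ₂-symmetric SPT entangler. -/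
noncomputable section

open NormedSpace  -- for the exponential `exp 𝕂`

/-- The generator `U_A = ∏_{j odd} X j` of the first ℤ₂ symmetry, realized as
the ordered product of the (pairwise commuting) Pauli-x factors on odd sites. -/
def UA (N : ℕ) : Matrix (Conf N) (Conf N) ℂ :=
  (List.ofFn (fun j : Fin N => if Odd (j : ℕ) then PX N j else 1)).prod

/-- The generator `U_B = ∏_{j even} X j` of the second ℤ₂ symmetry. -/
def UB (N : ℕ) : Matrix (Conf N) (Conf N) ℂ :=
  (List.ofFn (fun j : Fin N => if Even (j : ℕ) then PX N j else 1)).prod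

namespace SPTaux

open Matrix

variable {N : ℕ}

/-- Translation (spin-flip) matrix by `a`. -/
def T (N : ℕ) (a : Conf N) : Matrix (Conf N) (Conf N) ℂ :=
  fun s t => if t = s + a then 1 else 0

lemma T_zero : T N 0 = 1 := by
  ext s t
  simp [T, Matrix.one_apply, eq_comm]

lemma T_mul (a b : Conf N) : T N a * T N b = T N (a + b) := by
  ext s t
  simp only [T, Matrix.mul_apply, ite_mul, one_mul, zero_mul, mul_ite, mul_one, mul_zero]
  rw [Finset.sum_eq_single (s + a)]
  · simp [add_assoc]
  · intro x _ hx
    simp [hx]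
  · simp

lemma PX_eq_T (j : Fin N) : PX N j = T N (Pi.single j 1) := by
  ext s t
  have key : ((∀ i, i ≠ j → t i = s i) ∧ t j ≠ s j) ↔ t = s + Pi.single j 1 := by
    constructor
    · rintro ⟨h1, h2⟩
      funext i
      by_cases hi : i = j
      · subst hi
        have hfin : ∀ x y : Fin 2, x ≠ y → x = y + 1 := by decide
        simpa [Pi.single_eq_same] using hfin _ _ h2
      · simp [Pi.single_eq_of_ne hi, h1 i hi]
    · rintro rfl
      refine ⟨fun i hi => by simp [Pi.single_eq_of_ne hi], ?_⟩
      have hfin : ∀ y : Fin 2, y + 1 ≠ y := by decide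
      simpa [Pi.single_eq_same] using hfin (s j)
  simp only [PX, T, key]

lemma prod_map_T (l : List (Conf N)) : (l.map (T N)).prod = T N l.sum := by
  induction l with
  | nil => simp only [List.map_nil, List.prod_nil, List.sum_nil]; exact T_zero.symm
  | cons a l ih => simp [ih, T_mul]

def aFlip (N : ℕ) (p : ℕ → Prop) [DecidablePred p] : Conf N :=
  fun i => if p (i : ℕ) then 1 else 0

lemma U_eq_T (p : ℕ → Prop) [DecidablePred p] :
    (List.ofFn (fun j : Fin N => if p (j : ℕ) then PX N j else 1)).prod
      = T N (aFlip N p) := by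
  have h1 : (List.ofFn fun j : Fin N => if p (j : ℕ) then PX N j else 1)
      = (List.ofFn (fun j : Fin N => Pi.single j (if p (j : ℕ) then (1 : Fin 2) else 0))).map (T N) := by
    rw [List.map_ofFn]
    congr 1
    funext j
    by_cases h : p (j : ℕ) <;> simp [h, PX_eq_T, T_zero, Function.comp]
  rw [h1, prod_map_T, List.sum_ofFn]
  have h3 : (∑ i : Fin N, Pi.single i (if p (i : ℕ) then (1 : Fin 2) else 0)) = aFlip N p := by
    funext i
    rw [Finset.sum_apply, Finset.sum_eq_single i]
    · simp [aFlip]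
    · intro b _ hb
      exact Pi.single_eq_of_ne (Ne.symm hb) _
    · simp
  rw [h3]

lemma prod_map_diagonal (l : List (Conf N → ℂ)) :
    (l.map Matrix.diagonal).prod
      = Matrix.diagonal (fun s => (l.map (fun d => d s)).prod) := by
  induction l with
  | nil => simp only [List.map_nil, List.prod_nil]; exact Matrix.diagonal_one.symm
  | cons a l ih => simp [ih, Matrix.diagonal_mul_diagonal]

/-- The diagonal of the entangler. -/
def dval (N : ℕ) [NeZero N] (s : Conf N) : ℂ :=
  ∏ j : Fin N, Complex.exp (((Real.pi : ℂ) * Complex.I / 4) *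
    (1 + epsSign N j * ((-1 : ℂ) ^ ((s j : ℕ)) * (-1 : ℂ) ^ ((s (j + 1) : ℕ)))))

lemma entangler_eq_diagonal (N : ℕ) [NeZero N] :
    entangler N = Matrix.diagonal (dval N) := by
  have hfac : ∀ j : Fin N,
      exp (((Real.pi : ℂ) * Complex.I / 4) •
        ((1 : Matrix (Conf N) (Conf N) ℂ) + epsSign N j • (PZ N j * PZ N (j + 1))))
      = Matrix.diagonal (fun s => Complex.exp (((Real.pi : ℂ) * Complex.I / 4) *
          (1 + epsSign N j * ((-1 : ℂ) ^ ((s j : ℕ)) * (-1 : ℂ) ^ ((s (j + 1) : ℕ)))))) := by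
    intro j
    have h1 : ((Real.pi : ℂ) * Complex.I / 4) •
        ((1 : Matrix (Conf N) (Conf N) ℂ) + epsSign N j • (PZ N j * PZ N (j + 1)))
        = Matrix.diagonal (fun s => ((Real.pi : ℂ) * Complex.I / 4) *
            (1 + epsSign N j * ((-1 : ℂ) ^ ((s j : ℕ)) * (-1 : ℂ) ^ ((s (j + 1) : ℕ))))) := by
      rw [PZ, PZ, Matrix.diagonal_mul_diagonal, ← Matrix.diagonal_smul, ← Matrix.diagonal_one,
        Matrix.diagonal_add, ← Matrix.diagonal_smul]
      congr 1
    rw [h1, Matrix.exp_diagonal, Pi.exp_def]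
    congr 1
    funext s
    rw [← Complex.exp_eq_exp_ℂ]
  rw [entangler]
  have h2 : (List.ofFn fun j : Fin N =>
      exp (((Real.pi : ℂ) * Complex.I / 4) •
        ((1 : Matrix (Conf N) (Conf N) ℂ) + epsSign N j • (PZ N j * PZ N (j + 1)))))
      = (List.ofFn fun j : Fin N => (fun s : Conf N => Complex.exp (((Real.pi : ℂ) * Complex.I / 4) *
          (1 + epsSign N j * ((-1 : ℂ) ^ ((s j : ℕ)) * (-1 : ℂ) ^ ((s (j + 1) : ℕ))))))).map
          Matrix.diagonal := by
    rw [List.map_ofFn]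
    congr 1
    funext j
    exact hfac j
  rw [h2, prod_map_diagonal]
  refine congrArg Matrix.diagonal (funext fun s => ?_)
  rw [List.map_ofFn, List.prod_ofFn]
  rfl

lemma diagonal_comm_T (d : Conf N → ℂ) (a : Conf N) (h : ∀ s, d (s + a) = d s) :
    Matrix.diagonal d * T N a = T N a * Matrix.diagonal d := by
  ext s t
  rw [Matrix.diagonal_mul, Matrix.mul_diagonal]
  by_cases ht : t = s + a
  · subst ht
    rw [h s, mul_comm]
  · simp [T, ht]

end SPTaux

namespace SPTaux

variable {N : ℕ}

open Complex

lemma pm (n : ℕ) : ((-1 : ℂ)) ^ n = 1 ∨ ((-1 : ℂ)) ^ n = -1 := by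
  rcases Nat.even_or_odd n with h | h
  · exact Or.inl h.neg_one_pow
  · exact Or.inr h.neg_one_pow

lemma exp_mul_pm (x : ℂ) (hx : x = 1 ∨ x = -1) :
    Complex.exp (-((Real.pi : ℂ) * I / 2) * x) = -I * x := by
  have hc : Complex.cos ((Real.pi : ℂ) / 2) = 0 := Complex.cos_pi_div_two
  have hs : Complex.sin ((Real.pi : ℂ) / 2) = 1 := Complex.sin_pi_div_two
  rcases hx with rfl | rfl
  · have h : -((Real.pi : ℂ) * I / 2) * 1 = (-((Real.pi : ℂ) / 2)) * I := by ring
    rw [h, Complex.exp_mul_I, Complex.cos_neg, Complex.sin_neg, hc, hs]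
    ring
  · have h : -((Real.pi : ℂ) * I / 2) * (-1) = ((Real.pi : ℂ) / 2) * I := by ring
    rw [h, Complex.exp_mul_I, hc, hs]
    ring

lemma sum_two_mul_add_one (n : ℕ) : ∑ i ∈ Finset.range n, (2 * i + 1) = n * n := by
  induction n with
  | zero => simp
  | succ n ih => rw [Finset.sum_range_succ, ih]; ring

lemma prod_neg_I_eps (hNeven : Even N) :
    ∏ j : Fin N, (-I * epsSign N j) = 1 := by
  have h1 : ∀ j : Fin N, -I * epsSign N j = (-I) ^ (2 * (j : ℕ) + 1) := by
    intro j
    rw [epsSign, pow_succ, pow_mul]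
    have h2 : (-I) ^ 2 = -1 := by rw [neg_sq, Complex.I_sq]
    rw [h2]
    ring
  calc ∏ j : Fin N, (-I * epsSign N j)
      = ∏ j : Fin N, (-I) ^ (2 * (j : ℕ) + 1) := Finset.prod_congr rfl fun j _ => h1 j
    _ = (-I) ^ (∑ j : Fin N, (2 * (j : ℕ) + 1)) := by rw [Finset.prod_pow_eq_pow_sum]
    _ = 1 := by
        have hsum : ∑ j : Fin N, (2 * (j : ℕ) + 1) = N * N := by
          rw [Fin.sum_univ_eq_sum_range (fun i => 2 * i + 1) N, sum_two_mul_add_one]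
        rw [hsum]
        obtain ⟨m, rfl⟩ := hNeven
        have h4 : (m + m) * (m + m) = 4 * (m * m) := by ring
        rw [h4, pow_mul]
        have h5 : (-I) ^ 4 = 1 := by
          have h2 : (-I) ^ 2 = -1 := by rw [neg_sq, Complex.I_sq]
          calc (-I) ^ 4 = ((-I) ^ 2) ^ 2 := by rw [← pow_mul]
            _ = 1 := by rw [h2]; ring
        rw [h5, one_pow]

lemma prod_m_eq_one [NeZero N] (w : Fin N → ℂ) (hw : ∀ j, w j * w j = 1) :
    ∏ j : Fin N, (w j * w (j + 1)) = 1 := by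
  rw [Finset.prod_mul_distrib]
  have h1 : ∏ j : Fin N, w (j + 1) = ∏ j : Fin N, w j :=
    Fintype.prod_equiv (Equiv.addRight 1) _ _ (fun j => rfl)
  rw [h1, ← Finset.prod_mul_distrib]
  exact Finset.prod_eq_one fun j _ => hw j

lemma sq_neg_one_pow (n : ℕ) : ((-1 : ℂ)) ^ n * ((-1 : ℂ)) ^ n = 1 := by
  rw [← pow_add]
  exact Even.neg_one_pow ⟨n, rfl⟩

lemma dval_flip (N : ℕ) [NeZero N] (hNeven : Even N) (a : Conf N)
    (ha : ∀ j : Fin N, ((-1 : ℂ)) ^ ((a j : ℕ)) * ((-1 : ℂ)) ^ ((a (j + 1) : ℕ)) = -1)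
    (s : Conf N) : dval N (s + a) = dval N s := by
  have hw : ∀ i : Fin N, ((-1 : ℂ)) ^ (((s + a) i : ℕ))
      = (-1 : ℂ) ^ ((s i : ℕ)) * (-1 : ℂ) ^ ((a i : ℕ)) := by
    intro i
    have h1 : (((s + a) i : ℕ)) = ((s i : ℕ) + (a i : ℕ)) % 2 := by
      show ((s i + a i : Fin 2) : ℕ) = _
      rw [Fin.val_add]
    rw [h1, ← neg_one_pow_eq_pow_mod_two, pow_add]
  have key : ∀ j : Fin N,
      Complex.exp (((Real.pi : ℂ) * I / 4) * (1 + epsSign N j *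
        ((-1 : ℂ) ^ (((s + a) j : ℕ)) * (-1 : ℂ) ^ (((s + a) (j + 1) : ℕ))))) =
      Complex.exp (((Real.pi : ℂ) * I / 4) * (1 + epsSign N j *
        ((-1 : ℂ) ^ ((s j : ℕ)) * (-1 : ℂ) ^ ((s (j + 1) : ℕ))))) *
      Complex.exp (-((Real.pi : ℂ) * I / 2) * (epsSign N j *
        ((-1 : ℂ) ^ ((s j : ℕ)) * (-1 : ℂ) ^ ((s (j + 1) : ℕ))))) := by
    intro j
    rw [hw j, hw (j + 1), ← Complex.exp_add]
    congr 1
    linear_combination ((Real.pi : ℂ) * I / 4) * epsSign N j *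
      ((-1 : ℂ) ^ ((s j : ℕ)) * (-1 : ℂ) ^ ((s (j + 1) : ℕ))) * ha j
  have hone : (∏ j : Fin N, Complex.exp (-((Real.pi : ℂ) * I / 2) * (epsSign N j *
      ((-1 : ℂ) ^ ((s j : ℕ)) * (-1 : ℂ) ^ ((s (j + 1) : ℕ)))))) = 1 := by
    have hterm : ∀ j : Fin N,
        Complex.exp (-((Real.pi : ℂ) * I / 2) * (epsSign N j *
          ((-1 : ℂ) ^ ((s j : ℕ)) * (-1 : ℂ) ^ ((s (j + 1) : ℕ)))))
        = (-I * epsSign N j) * ((-1 : ℂ) ^ ((s j : ℕ)) * (-1 : ℂ) ^ ((s (j + 1) : ℕ))) := by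
      intro j
      have hp : epsSign N j * ((-1 : ℂ) ^ ((s j : ℕ)) * (-1 : ℂ) ^ ((s (j + 1) : ℕ)))
          = (-1 : ℂ) ^ ((j : ℕ) + (s j : ℕ) + (s (j + 1) : ℕ)) := by
        rw [epsSign, pow_add, pow_add]
        ring
      have hx : epsSign N j * ((-1 : ℂ) ^ ((s j : ℕ)) * (-1 : ℂ) ^ ((s (j + 1) : ℕ))) = 1 ∨
          epsSign N j * ((-1 : ℂ) ^ ((s j : ℕ)) * (-1 : ℂ) ^ ((s (j + 1) : ℕ))) = -1 := by
        rw [hp]; exact pm _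
      rw [exp_mul_pm _ hx]
      ring
    calc (∏ j : Fin N, Complex.exp (-((Real.pi : ℂ) * I / 2) * (epsSign N j *
          ((-1 : ℂ) ^ ((s j : ℕ)) * (-1 : ℂ) ^ ((s (j + 1) : ℕ))))))
        = ∏ j : Fin N, ((-I * epsSign N j) *
            ((-1 : ℂ) ^ ((s j : ℕ)) * (-1 : ℂ) ^ ((s (j + 1) : ℕ)))) :=
          Finset.prod_congr rfl fun j _ => hterm j
      _ = (∏ j : Fin N, (-I * epsSign N j)) *
            ∏ j : Fin N, ((-1 : ℂ) ^ ((s j : ℕ)) * (-1 : ℂ) ^ ((s (j + 1) : ℕ))) :=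
          Finset.prod_mul_distrib
      _ = 1 := by
          rw [prod_neg_I_eps hNeven,
            prod_m_eq_one (fun j => (-1 : ℂ) ^ ((s j : ℕ))) (fun j => sq_neg_one_pow _),
            one_mul]
  unfold dval
  calc (∏ j : Fin N, Complex.exp (((Real.pi : ℂ) * I / 4) * (1 + epsSign N j *
        ((-1 : ℂ) ^ (((s + a) j : ℕ)) * (-1 : ℂ) ^ (((s + a) (j + 1) : ℕ))))))
      = ∏ j : Fin N, (Complex.exp (((Real.pi : ℂ) * I / 4) * (1 + epsSign N j *
          ((-1 : ℂ) ^ ((s j : ℕ)) * (-1 : ℂ) ^ ((s (j + 1) : ℕ))))) *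
        Complex.exp (-((Real.pi : ℂ) * I / 2) * (epsSign N j *
          ((-1 : ℂ) ^ ((s j : ℕ)) * (-1 : ℂ) ^ ((s (j + 1) : ℕ)))))) :=
        Finset.prod_congr rfl fun j _ => key j
    _ = (∏ j : Fin N, Complex.exp (((Real.pi : ℂ) * I / 4) * (1 + epsSign N j *
          ((-1 : ℂ) ^ ((s j : ℕ)) * (-1 : ℂ) ^ ((s (j + 1) : ℕ)))))) *
        ∏ j : Fin N, Complex.exp (-((Real.pi : ℂ) * I / 2) * (epsSign N j *
          ((-1 : ℂ) ^ ((s j : ℕ)) * (-1 : ℂ) ^ ((s (j + 1) : ℕ))))) :=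
        Finset.prod_mul_distrib
    _ = ∏ j : Fin N, Complex.exp (((Real.pi : ℂ) * I / 4) * (1 + epsSign N j *
          ((-1 : ℂ) ^ ((s j : ℕ)) * (-1 : ℂ) ^ ((s (j + 1) : ℕ))))) := by
        rw [hone, mul_one]

end SPTaux

namespace SPTaux

open Complex

variable {N : ℕ}

lemma val_next_mod [NeZero N] (hNeven : Even N) (hN : 4 ≤ N) (j : Fin N) :
    (((j + 1 : Fin N)) : ℕ) % 2 = ((j : ℕ) + 1) % 2 := by
  rw [Fin.val_add, Fin.val_one', Nat.mod_eq_of_lt (show (1 : ℕ) < N by omega)]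
  exact Nat.mod_mod_of_dvd _ hNeven.two_dvd

lemma neg_one_pow_next [NeZero N] (hNeven : Even N) (hN : 4 ≤ N) (j : Fin N) :
    ((-1 : ℂ)) ^ (((j + 1 : Fin N)) : ℕ) = -((-1 : ℂ)) ^ ((j : ℕ)) := by
  rw [neg_one_pow_eq_pow_mod_two, val_next_mod hNeven hN, ← neg_one_pow_eq_pow_mod_two,
    pow_succ]
  ring

lemma haA [NeZero N] (hNeven : Even N) (hN : 4 ≤ N) (j : Fin N) :
    ((-1 : ℂ)) ^ ((aFlip N Odd j : ℕ)) * ((-1 : ℂ)) ^ ((aFlip N Odd (j + 1) : ℕ)) = -1 := by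
  have hA : ∀ i : Fin N, ((-1 : ℂ)) ^ ((aFlip N Odd i : ℕ)) = ((-1 : ℂ)) ^ ((i : ℕ)) := by
    intro i
    by_cases h : Odd (i : ℕ)
    · simp [aFlip, h, h.neg_one_pow]
    · simp [aFlip, h, (Nat.not_odd_iff_even.mp h).neg_one_pow]
  rw [hA j, hA (j + 1), neg_one_pow_next hNeven hN]
  linear_combination (-1 : ℂ) * sq_neg_one_pow ((j : ℕ))

lemma haB [NeZero N] (hNeven : Even N) (hN : 4 ≤ N) (j : Fin N) :
    ((-1 : ℂ)) ^ ((aFlip N Even j : ℕ)) * ((-1 : ℂ)) ^ ((aFlip N Even (j + 1) : ℕ)) = -1 := by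
  have hB : ∀ i : Fin N, ((-1 : ℂ)) ^ ((aFlip N Even i : ℕ)) = -((-1 : ℂ)) ^ ((i : ℕ)) := by
    intro i
    by_cases h : Even (i : ℕ)
    · simp [aFlip, h, h.neg_one_pow]
    · simp [aFlip, h, (Nat.not_even_iff_odd.mp h).neg_one_pow]
  rw [hB j, hB (j + 1), neg_one_pow_next hNeven hN]
  linear_combination (-1 : ℂ) * sq_neg_one_pow ((j : ℕ))

end SPTaux

/-- for even `N ≥ 4`, the SPT entangler `V` commutes with both
generators `U_A` and `U_B` of the ℤ₂×ℤ₂ symmetry; hence `V` is a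
ℤ₂×ℤ₂-symmetric SPT entangler. -/
theorem entangler_symmetric (N : ℕ) [NeZero N] (hN : 4 ≤ N) (hNeven : Even N) :
    entangler N * UA N = UA N * entangler N ∧
    entangler N * UB N = UB N * entangler N := by
  have hUA : UA N = SPTaux.T N (SPTaux.aFlip N Odd) := SPTaux.U_eq_T Odd
  have hUB : UB N = SPTaux.T N (SPTaux.aFlip N Even) := SPTaux.U_eq_T Even
  rw [SPTaux.entangler_eq_diagonal, hUA, hUB]
  constructor
  · exact SPTaux.diagonal_comm_T _ _
      (fun s => SPTaux.dval_flip N hNeven _ (SPTaux.haA hNeven hN) s)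
  · exact SPTaux.diagonal_comm_T _ _
      (fun s => SPTaux.dval_flip N hNeven _ (SPTaux.haB hNeven hN) s)

end
end

section
/- Fix an even integer N ≥ 4 and let V := ∏_{j : Fin N} Matrix.exp ((π * Complex.I / 4) • (1 + (ε j : ℂ) • (Z j * Z (j + 1)))). Let j m : ℕ with j odd and j + 2*m + 1 < N, and let W := ∏_{i ∈ Finset.range (m+1)} X ((j + 2*i : ℕ) : Fin N) (the string of Pauli-x operators on the odd sites j, j+2, …, j+2m). Then V * W * V⁻¹ = Z ((j - 1 : ℕ) : Fin N) * W * Z ((j + 2*m + 1 : ℕ) : Fin N). Hence conjugation by the SPT entangler maps the trivial-phase string order parameter W_0^A(j, j+2m) to the SPT string order parameter W_SPT^A(j, j+2m). -/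
noncomputable section

open NormedSpace  -- for the exponential `exp 𝕂`
open Fin.NatCast

/-- The string of Pauli-x operators on the odd sites `j, j+2, …, j+2m`
(the trivial-phase string order parameter `W_0^A(j, j+2m)`), realized as the
ordered product of the pairwise commuting Pauli-x factors. -/
def Wstring (N : ℕ) [NeZero N] (j m : ℕ) : Matrix (Conf N) (Conf N) ℂ :=
  ((List.range (m + 1)).map (fun i => PX N ((j + 2 * i : ℕ) : Fin N))).prod

namespace SPTAux

/-- diagonal entry sign `(-1)^{s k}(-1)^{s (k+1)}` -/
def dsn (N : ℕ) [NeZero N] (k : Fin N) (s : Conf N) : ℂ :=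
  (-1 : ℂ) ^ ((s k : ℕ)) * (-1 : ℂ) ^ ((s (k + 1) : ℕ))

/-- diagonal entry of the `k`-th entangler factor -/
def fac (N : ℕ) [NeZero N] (k : Fin N) (s : Conf N) : ℂ :=
  Complex.exp ((Real.pi : ℂ) * Complex.I / 4 * (1 + epsSign N k * dsn N k s))

/-- diagonal entries of the entangler -/
def vfun (N : ℕ) [NeZero N] (s : Conf N) : ℂ := ∏ k : Fin N, fac N k s

lemma list_prod_diag (N : ℕ) [NeZero N] (l : List (Conf N → ℂ)) :
    ((l.map Matrix.diagonal).prod : Matrix (Conf N) (Conf N) ℂ)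
      = Matrix.diagonal (fun s => (l.map (fun f => f s)).prod) := by
  induction l with
  | nil => simp
  | cons f l ih =>
      simp only [List.map_cons, List.prod_cons, ih, Matrix.diagonal_mul_diagonal]

lemma factor_diag (N : ℕ) [NeZero N] (k : Fin N) :
    exp (((Real.pi : ℂ) * Complex.I / 4) •
      ((1 : Matrix (Conf N) (Conf N) ℂ) + epsSign N k • (PZ N k * PZ N (k + 1))))
      = Matrix.diagonal (fun s => fac N k s) := by
  have harg : ((Real.pi : ℂ) * Complex.I / 4) •
      ((1 : Matrix (Conf N) (Conf N) ℂ) + epsSign N k • (PZ N k * PZ N (k + 1)))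
      = Matrix.diagonal (fun s =>
          (Real.pi : ℂ) * Complex.I / 4 * (1 + epsSign N k * dsn N k s)) := by
    rw [PZ, PZ, Matrix.diagonal_mul_diagonal, ← Matrix.diagonal_smul,
      ← Matrix.diagonal_one, Matrix.diagonal_add, ← Matrix.diagonal_smul]
    refine congrArg Matrix.diagonal ?_
    funext s
    simp [Pi.smul_apply, Pi.add_apply, smul_eq_mul, dsn]
  rw [harg, Matrix.exp_diagonal]
  congr 1
  funext s
  rw [Pi.exp_def, ← Complex.exp_eq_exp_ℂ]
  rfl

lemma entangler_diag (N : ℕ) [NeZero N] :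
    entangler N = Matrix.diagonal (vfun N) := by
  unfold entangler
  simp only [factor_diag]
  have h1 : (List.ofFn fun j : Fin N => Matrix.diagonal (fun s => fac N j s))
      = (List.ofFn fun j : Fin N => (fun s => fac N j s)).map Matrix.diagonal := by
    rw [List.map_ofFn]; rfl
  rw [h1, list_prod_diag]
  have hv : (fun s : Conf N =>
      (((List.ofFn fun j : Fin N => fun s => fac N j s).map (fun f => f s)).prod : ℂ))
      = vfun N := by
    funext s
    rw [List.map_ofFn]
    have h2 : ((fun f : Conf N → ℂ => f s) ∘ fun j : Fin N => fun s => fac N j s)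
        = fun j : Fin N => fac N j s := rfl
    rw [h2, List.prod_ofFn]
    rfl
  rw [hv]

/-- the spin flip at site `p` -/
def flip (N : ℕ) [NeZero N] (p : Fin N) (s : Conf N) : Conf N :=
  Function.update s p (s p + 1)

lemma fin2_ne_iff : ∀ a b : Fin 2, (b ≠ a ↔ b = a + 1) := by decide

lemma PX_eq (N : ℕ) [NeZero N] (p : Fin N) :
    PX N p = fun s t => if t = flip N p s then (1 : ℂ) else 0 := by
  funext s t
  unfold PX flip
  congr 1
  simp only [eq_iff_iff]
  constructor
  · rintro ⟨h1, h2⟩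
    funext i
    by_cases hi : i = p
    · subst hi
      rw [Function.update_self]
      exact (fin2_ne_iff (s i) (t i)).mp h2
    · rw [Function.update_of_ne hi]
      exact h1 i hi
  · rintro rfl
    refine ⟨fun i hi => Function.update_of_ne hi _ _, ?_⟩
    rw [Function.update_self]
    exact (fin2_ne_iff (s p) (s p + 1)).mpr rfl

lemma neg_one_pow_fin2_succ (a : Fin 2) :
    ((-1 : ℂ)) ^ (((a + 1 : Fin 2) : ℕ)) = -(-1 : ℂ) ^ ((a : ℕ)) := by
  fin_cases a <;> simp

lemma neg_one_pow_pm (n : ℕ) : ((-1 : ℂ)) ^ n = 1 ∨ ((-1 : ℂ)) ^ n = -1 := by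
  rcases Nat.even_or_odd n with h | h
  · left; exact h.neg_one_pow
  · right; exact h.neg_one_pow

lemma scalar_key (e1 e2 A B C : ℂ) (he1 : e1 = 1 ∨ e1 = -1)
    (he : e1 * e2 = -1) (hA : A = 1 ∨ A = -1) (hB : B = 1 ∨ B = -1)
    (hC : C = 1 ∨ C = -1) :
    Complex.exp ((Real.pi : ℂ) * Complex.I / 4 * (1 + e1 * (A * B))) *
      Complex.exp ((Real.pi : ℂ) * Complex.I / 4 * (1 + e2 * (B * C))) =
    A * (C * (Complex.exp ((Real.pi : ℂ) * Complex.I / 4 * (1 + e1 * (A * -B))) *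
      Complex.exp ((Real.pi : ℂ) * Complex.I / 4 * (1 + e2 * (-B * C))))) := by
  have h2 : Complex.exp ((Real.pi : ℂ) * Complex.I / 4 * 2) = Complex.I := by
    have harg : (Real.pi : ℂ) * Complex.I / 4 * 2 = ((Real.pi / 2 : ℝ) : ℂ) * Complex.I := by
      push_cast; ring
    rw [harg, Complex.exp_mul_I, ← Complex.ofReal_cos, ← Complex.ofReal_sin,
      Real.cos_pi_div_two, Real.sin_pi_div_two]
    simp
  have he2 : e2 = -e1 := by
    rcases he1 with rfl | rfl
    · linear_combination he
    · linear_combination -he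
  subst he2
  rcases he1 with rfl | rfl <;> rcases hA with rfl | rfl <;> rcases hB with rfl | rfl <;>
    rcases hC with rfl | rfl <;>
  norm_num [h2, Complex.exp_zero, Complex.I_mul_I]

lemma one_ne_zero_fin (N : ℕ) [NeZero N] (hN : 4 ≤ N) : (1 : Fin N) ≠ 0 := by
  intro h
  have := congrArg Fin.val h
  rw [Fin.val_one', Nat.mod_eq_of_lt (by omega), Fin.val_zero] at this
  omega

lemma add_one_ne (N : ℕ) [NeZero N] (hN : 4 ≤ N) (p : Fin N) : p + 1 ≠ p := by
  intro h
  refine one_ne_zero_fin N hN (add_left_cancel (a := p) ?_)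
  rw [add_zero]
  exact h

lemma eps_adj (N : ℕ) [NeZero N] (hN : 4 ≤ N) (hNe : Even N) (p : Fin N) :
    epsSign N (p - 1) * epsSign N p = -1 := by
  have h1 : ((1 : Fin N) : ℕ) = 1 := by
    rw [Fin.val_one']; exact Nat.mod_eq_of_lt (by omega)
  have hq : (p - 1) + 1 = p := sub_add_cancel p 1
  have hval : (p : ℕ) = (((p - 1 : Fin N) : ℕ) + 1) % N := by
    conv_lhs => rw [← hq]
    rw [Fin.val_add, h1]
  have hodd : Odd (((p - 1 : Fin N) : ℕ) + (p : ℕ)) := by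
    rcases lt_or_ge (((p - 1 : Fin N) : ℕ) + 1) N with h | h
    · rw [hval, Nat.mod_eq_of_lt h]
      exact ⟨((p - 1 : Fin N) : ℕ), by ring⟩
    · have hlt : ((p - 1 : Fin N) : ℕ) < N := (p - 1).isLt
      have heq : ((p - 1 : Fin N) : ℕ) + 1 = N := by omega
      have hp0 : (p : ℕ) = 0 := by rw [hval, heq, Nat.mod_self]
      rw [hp0, Nat.add_zero]
      obtain ⟨r, hr⟩ := hNe
      exact ⟨r - 1, by omega⟩
  rw [epsSign, epsSign, ← pow_add]
  exact hodd.neg_one_pow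

lemma vfun_flip (N : ℕ) [NeZero N] (hN : 4 ≤ N) (hNe : Even N) (p : Fin N) (s : Conf N) :
    vfun N s = (-1 : ℂ) ^ ((s (p - 1) : ℕ)) *
      ((-1 : ℂ) ^ ((s (p + 1) : ℕ)) * vfun N (flip N p s)) := by
  have h10 : (1 : Fin N) ≠ 0 := one_ne_zero_fin N hN
  have hp1 : p - 1 ≠ p := fun h => h10 (sub_eq_self.mp h)
  have hp1' : p ≠ p - 1 := fun h => hp1 h.symm
  have hp2 : p + 1 ≠ p := add_one_ne N hN p
  set t := flip N p s with ht
  have ht_ne : ∀ k : Fin N, k ≠ p → t k = s k := fun k hk => Function.update_of_ne hk _ _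
  have ht_p : t p = s p + 1 := Function.update_self _ _ _
  have hsplit : ∀ u : Conf N, vfun N u =
      fac N (p - 1) u * (fac N p u *
        ∏ k ∈ ((Finset.univ.erase (p - 1)).erase p), fac N k u) := by
    intro u
    rw [vfun, ← Finset.mul_prod_erase Finset.univ _ (Finset.mem_univ (p - 1))]
    congr 1
    rw [← Finset.mul_prod_erase _ _ (Finset.mem_erase.mpr ⟨hp1', Finset.mem_univ p⟩)]
  have hrest : (∏ k ∈ ((Finset.univ.erase (p - 1)).erase p), fac N k t)
      = ∏ k ∈ ((Finset.univ.erase (p - 1)).erase p), fac N k s := by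
    refine Finset.prod_congr rfl (fun k hk => ?_)
    have hk1 : k ≠ p := (Finset.mem_erase.mp hk).1
    have hk2 : k ≠ p - 1 := (Finset.mem_erase.mp (Finset.mem_erase.mp hk).2).1
    have hk3 : k + 1 ≠ p := fun h => hk2 (eq_sub_of_add_eq h)
    unfold fac dsn
    rw [ht_ne k hk1, ht_ne (k + 1) hk3]
  have hq : (p - 1) + 1 = p := sub_add_cancel p 1
  have d1s : dsn N (p - 1) s = (-1 : ℂ) ^ ((s (p - 1) : ℕ)) * (-1 : ℂ) ^ ((s p : ℕ)) := by
    rw [dsn, hq]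
  have dps : dsn N p s = (-1 : ℂ) ^ ((s p : ℕ)) * (-1 : ℂ) ^ ((s (p + 1) : ℕ)) := rfl
  have d1t : dsn N (p - 1) t =
      (-1 : ℂ) ^ ((s (p - 1) : ℕ)) * -(-1 : ℂ) ^ ((s p : ℕ)) := by
    rw [dsn, hq, ht_ne (p - 1) hp1, ht_p, neg_one_pow_fin2_succ]
  have dpt : dsn N p t =
      -(-1 : ℂ) ^ ((s p : ℕ)) * (-1 : ℂ) ^ ((s (p + 1) : ℕ)) := by
    rw [dsn, ht_ne (p + 1) hp2, ht_p, neg_one_pow_fin2_succ]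
  have key : fac N (p - 1) s * fac N p s =
      (-1 : ℂ) ^ ((s (p - 1) : ℕ)) *
        ((-1 : ℂ) ^ ((s (p + 1) : ℕ)) * (fac N (p - 1) t * fac N p t)) := by
    unfold fac
    rw [d1s, dps, d1t, dpt]
    exact scalar_key _ _ _ _ _ (neg_one_pow_pm _) (eps_adj N hN hNe p)
      (neg_one_pow_pm _) (neg_one_pow_pm _) (neg_one_pow_pm _)
  rw [hsplit s, hsplit t, hrest]
  linear_combination (∏ k ∈ ((Finset.univ.erase (p - 1)).erase p), fac N k s) * key

lemma conj_single (N : ℕ) [NeZero N] (hN : 4 ≤ N) (hNe : Even N) (p : Fin N) :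
    entangler N * PX N p = PZ N (p - 1) * (PX N p * (PZ N (p + 1) * entangler N)) := by
  rw [entangler_diag, PX_eq, PZ, PZ, Matrix.diagonal_mul_diagonal]
  ext s u
  erw [Matrix.diagonal_mul, Matrix.diagonal_mul, Matrix.mul_diagonal]
  by_cases h : u = flip N p s
  · subst h
    rw [if_pos rfl]
    have hp2 : p + 1 ≠ p := add_one_ne N hN p
    have hfl : (flip N p s) (p + 1) = s (p + 1) := Function.update_of_ne hp2 _ _
    rw [hfl, mul_one, one_mul]
    exact vfun_flip N hN hNe p s
  · rw [if_neg h]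
    ring

lemma PZ_mul_self (N : ℕ) [NeZero N] (a : Fin N) : PZ N a * PZ N a = 1 := by
  rw [PZ, Matrix.diagonal_mul_diagonal, ← Matrix.diagonal_one]
  have : (fun i : Conf N => (-1 : ℂ) ^ ((i a : ℕ)) * (-1 : ℂ) ^ ((i a : ℕ)))
      = fun _ : Conf N => (1 : ℂ) := by
    funext s
    rw [← pow_add]
    exact Even.neg_one_pow ⟨_, rfl⟩
  rw [this]

lemma entangler_mul_inv (N : ℕ) [NeZero N] : entangler N * (entangler N)⁻¹ = 1 := by
  apply Matrix.mul_nonsing_inv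
  rw [entangler_diag, Matrix.det_diagonal]
  apply isUnit_iff_ne_zero.mpr
  refine Finset.prod_ne_zero_iff.mpr (fun s _ => ?_)
  rw [vfun]
  exact Finset.prod_ne_zero_iff.mpr (fun k _ => Complex.exp_ne_zero _)

lemma Wsucc (N : ℕ) [NeZero N] (j m : ℕ) :
    Wstring N j (m + 1) = Wstring N j m * PX N ((j + 2 * (m + 1) : ℕ) : Fin N) := by
  unfold Wstring
  rw [List.range_succ, List.map_append, List.prod_append]
  simp

lemma conj_string (N : ℕ) [NeZero N] (hN : 4 ≤ N) (hNe : Even N) (j : ℕ) (hj : 1 ≤ j) :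
    ∀ m, entangler N * Wstring N j m =
      PZ N ((j - 1 : ℕ) : Fin N) * Wstring N j m *
        PZ N ((j + 2 * m + 1 : ℕ) : Fin N) * entangler N := by
  have hc1 : ((j - 1 : ℕ) : Fin N) = ((j : ℕ) : Fin N) - 1 := by
    apply eq_sub_of_add_eq
    have h' : ((j - 1 : ℕ) : Fin N) + 1 = ((j - 1 + 1 : ℕ) : Fin N) := by push_cast; ring
    rw [h']
    congr 1
    omega
  intro m
  induction m with
  | zero =>
      have hW0 : Wstring N j 0 = PX N ((j : ℕ) : Fin N) := by
        unfold Wstring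
        rw [List.range_succ]
        simp
      rw [hW0]
      rw [conj_single N hN hNe ((j : ℕ) : Fin N)]
      have hcr : ((j + 2 * 0 + 1 : ℕ) : Fin N) = ((j : ℕ) : Fin N) + 1 := by
        push_cast
        simp
      rw [hcr, hc1]
      simp only [mul_assoc]
  | succ m ih =>
      rw [Wsucc, ← mul_assoc, ih]
      have hq1 : (((j + 2 * (m + 1) : ℕ)) : Fin N) - 1 = ((j + 2 * m + 1 : ℕ) : Fin N) := by
        have : ((j + 2 * (m + 1) : ℕ) : Fin N) = ((j + 2 * m + 1 : ℕ) : Fin N) + 1 := by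
          have h'' : j + 2 * (m + 1) = j + 2 * m + 1 + 1 := by omega
          rw [h'']
          push_cast
          ring
        rw [this, add_sub_cancel_right]
      have hq2 : (((j + 2 * (m + 1) : ℕ)) : Fin N) + 1 = ((j + 2 * (m + 1) + 1 : ℕ) : Fin N) := by
        push_cast
        ring
      rw [mul_assoc _ (entangler N) (PX N _), conj_single N hN hNe, hq1, hq2, hc1]
      simp only [mul_assoc]
      rw [← mul_assoc (PZ N ((j + 2 * m + 1 : ℕ) : Fin N)) (PZ N ((j + 2 * m + 1 : ℕ) : Fin N)),
        PZ_mul_self, one_mul]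

end SPTAux

/-- for even `N ≥ 4`, odd `j` and `j + 2m + 1 < N`, conjugation
by the SPT entangler maps the trivial-phase string order parameter
`W = W_0^A(j, j+2m)` to the SPT string order parameter
`W_SPT^A(j, j+2m) = Z (j-1) * W * Z (j+2m+1)`. -/
theorem entangler_string_order (N : ℕ) [NeZero N] (hN : 4 ≤ N) (hNeven : Even N)
    (j m : ℕ) (hj : Odd j) (hjm : j + 2 * m + 1 < N) :
    entangler N * Wstring N j m * (entangler N)⁻¹ =
      PZ N ((j - 1 : ℕ) : Fin N) * Wstring N j m * PZ N ((j + 2 * m + 1 : ℕ) : Fin N) := by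
  have h := SPTAux.conj_string N hN hNeven j hj.pos m
  rw [h, mul_assoc, SPTAux.entangler_mul_inv, mul_one]

end
end
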